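/- Let n ∈ ℕ, Ψ(θ) = (√2/n)cos(nθ), and let g : [0,2π] → ℝ be absolutely continuous and 2π-periodic. Then the function θ ↦ ∫₀^θ g(θ')((Ψ'(θ'))² − 1) dθ' satisfies ‖∫₀^θ g((Ψ')² − 1)‖_{L¹(0,2π)} ≤ (C/n)(‖g‖_{L¹(0,2π)} + ‖g'‖_{L¹(0,2π)}) for a universal constant C. -/

import Mathlib

open MeasureTheory Real intervalIntegral Set


lemma fubini_triangle {g' c : ℝ → ℝ} {θ : ℝ} (hθ : 0 ≤ θ)
    (hg' : IntegrableOn g' (Set.Ioc 0 θ)) (hc : Continuous c) :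
    ∫ s in (0:ℝ)..θ, (∫ t in (0:ℝ)..s, g' t) * c s
      = ∫ t in (0:ℝ)..θ, g' t * (∫ s in t..θ, c s) := by
  obtain ⟨M₀, hM₀⟩ := (isCompact_Icc (a := (0:ℝ)) (b := θ)).exists_bound_of_continuousOn
    hc.continuousOn
  set M := max M₀ 0 with hMdef
  have hM : ∀ s ∈ Set.Ioc (0:ℝ) θ, |c s| ≤ M := fun s hs =>
    le_trans (hM₀ s (Ioc_subset_Icc_self hs)) (le_max_left _ _)
  have hM0 : 0 ≤ M := le_max_right _ _
  set μ := volume.restrict (Set.Ioc (0:ℝ) θ) with hμ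
  set f : ℝ → ℝ → ℝ := fun s t => if t ≤ s then g' t * c s else 0 with hf
  have haem : AEStronglyMeasurable (Function.uncurry f) (μ.prod μ) := by
    have h1 : AEStronglyMeasurable (fun p : ℝ × ℝ => g' p.2 * c p.1) (μ.prod μ) :=
      hg'.aestronglyMeasurable.comp_snd.mul (hc.comp continuous_fst).aestronglyMeasurable
    have heq : Function.uncurry f =
        Set.indicator {p : ℝ × ℝ | p.2 ≤ p.1} (fun p => g' p.2 * c p.1) := by
      ext p
      by_cases h : p.2 ≤ p.1 <;>
        simp [Function.uncurry, hf, h, Set.indicator_apply]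
    rw [heq]
    exact h1.indicator (measurableSet_le measurable_snd measurable_fst)
  have hae_mem : ∀ᵐ p ∂(μ.prod μ), p ∈ (Set.Ioc (0:ℝ) θ) ×ˢ (Set.Ioc (0:ℝ) θ) := by
    rw [hμ, Measure.prod_restrict]
    exact ae_restrict_mem (measurableSet_Ioc.prod measurableSet_Ioc)
  have hint : Integrable (Function.uncurry f) (μ.prod μ) := by
    have hbound : Integrable (fun p : ℝ × ℝ => M * |g' p.2|) (μ.prod μ) :=
      (integrable_const M).mul_prod hg'.abs
    refine hbound.mono' haem ?_
    filter_upwards [hae_mem] with p hp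
    rcases hp with ⟨hp1, _⟩
    by_cases h : p.2 ≤ p.1
    · simp only [Function.uncurry, hf, if_pos h, Real.norm_eq_abs, abs_mul]
      calc |g' p.2| * |c p.1| ≤ |g' p.2| * M :=
            mul_le_mul_of_nonneg_left (hM _ hp1) (abs_nonneg _)
        _ = M * |g' p.2| := mul_comm _ _
    · simp only [Function.uncurry, hf, if_neg h, norm_zero]
      positivity
  have hswap := MeasureTheory.integral_integral_swap hint
  have hL : ∫ s, (∫ t, f s t ∂μ) ∂μ = ∫ s in (0:ℝ)..θ, (∫ t in (0:ℝ)..s, g' t) * c s := by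
    rw [intervalIntegral.integral_of_le hθ]
    refine integral_congr_ae ?_
    filter_upwards [ae_restrict_mem measurableSet_Ioc] with s hs
    have h1 : ∀ᵐ t ∂μ, f s t = (Set.Ioc 0 s).indicator (fun t => g' t * c s) t := by
      filter_upwards [ae_restrict_mem measurableSet_Ioc] with t ht
      by_cases h : t ≤ s
      · simp [hf, h, Set.indicator_of_mem, Set.mem_Ioc, ht.1]
      · simp [hf, h, Set.indicator_apply, Set.mem_Ioc]
    rw [integral_congr_ae h1, MeasureTheory.integral_indicator measurableSet_Ioc, hμ,
      Measure.restrict_restrict measurableSet_Ioc,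
      Set.inter_eq_left.mpr (Set.Ioc_subset_Ioc le_rfl hs.2),
      MeasureTheory.integral_mul_const, intervalIntegral.integral_of_le hs.1.le]
  have hR : ∫ t, (∫ s, f s t ∂μ) ∂μ = ∫ t in (0:ℝ)..θ, g' t * (∫ s in t..θ, c s) := by
    rw [intervalIntegral.integral_of_le hθ]
    refine integral_congr_ae ?_
    filter_upwards [ae_restrict_mem measurableSet_Ioc] with t ht
    have hsingle : ∀ᵐ s ∂μ, s ≠ t := by
      refine (ae_iff.2 ?_)
      have : {s : ℝ | ¬ s ≠ t} = {t} := by ext s; simp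
      rw [this, hμ, Measure.restrict_apply (measurableSet_singleton t)]
      exact measure_mono_null Set.inter_subset_left (measure_singleton t)
    have h1 : ∀ᵐ s ∂μ, f s t = (Set.Ioc t θ).indicator (fun s => g' t * c s) s := by
      filter_upwards [ae_restrict_mem measurableSet_Ioc, hsingle] with s hs hne
      by_cases h : t ≤ s
      · have htlt : t < s := lt_of_le_of_ne h (Ne.symm hne)
        simp [hf, h, Set.indicator_of_mem, Set.mem_Ioc, htlt, hs.2]
      · have : ¬ (t < s ∧ s ≤ θ) := fun hh => h hh.1.le
        simp [hf, h, Set.indicator_apply, Set.mem_Ioc, this]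
    rw [integral_congr_ae h1, MeasureTheory.integral_indicator measurableSet_Ioc, hμ,
      Measure.restrict_restrict measurableSet_Ioc,
      Set.inter_eq_left.mpr (Set.Ioc_subset_Ioc ht.1.le le_rfl),
      MeasureTheory.integral_const_mul, intervalIntegral.integral_of_le ht.2]
  rw [← hL, hswap, hR]

lemma integral_cos_k (k : ℝ) (hk : k ≠ 0) (a b : ℝ) :
    ∫ s in a..b, Real.cos (k*s) = Real.sin (k*b)/k - Real.sin (k*a)/k := by
  have h : ∀ x : ℝ, HasDerivAt (fun x => Real.sin (k*x)/k) (Real.cos (k*x)) x := by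
    intro x
    have h1 : HasDerivAt (fun x : ℝ => Real.sin (k*x)) (Real.cos (k*x)*k) x := by
      have := (Real.hasDerivAt_sin (k*x)).comp x ((hasDerivAt_id x).const_mul k)
      exact this.congr_deriv (by ring)
    have h2 := h1.div_const k
    simpa [mul_div_cancel_right₀ _ hk] using h2
  rw [intervalIntegral.integral_eq_sub_of_hasDerivAt (fun x _ => h x)
    ((Real.continuous_cos.comp (continuous_const.mul continuous_id)).intervalIntegrable a b)]

set_option maxHeartbeats 1000000 in
lemma rep_lemma {g g' : ℝ → ℝ} {k θ T : ℝ} (hk : k ≠ 0) (hθ : θ ∈ Set.Icc 0 T)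
    (hg' : IntervalIntegrable g' volume 0 T)
    (hftc : ∀ a b, a ∈ Set.Icc (0:ℝ) T → b ∈ Set.Icc (0:ℝ) T →
      g b - g a = ∫ t in a..b, g' t) :
    ∫ s in (0:ℝ)..θ, g s * Real.cos (k*s)
      = g θ * Real.sin (k*θ)/k - (∫ t in (0:ℝ)..θ, g' t * Real.sin (k*t))/k := by
  obtain ⟨hθ1, hθ2⟩ := hθ
  have hT : (0:ℝ) ≤ T := hθ1.trans hθ2
  have hsub : Set.uIcc (0:ℝ) θ ⊆ Set.uIcc (0:ℝ) T := by
    rw [Set.uIcc_of_le hθ1, Set.uIcc_of_le hT]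
    exact Set.Icc_subset_Icc le_rfl hθ2
  have hg'θ : IntervalIntegrable g' volume 0 θ := hg'.mono_set hsub
  have hEq : Set.EqOn (fun s => g s * Real.cos (k*s))
      (fun s => (g 0 + ∫ t in (0:ℝ)..s, g' t) * Real.cos (k*s)) (Set.uIcc 0 θ) := by
    intro s hs
    rw [Set.uIcc_of_le hθ1] at hs
    have h0 := hftc 0 s ⟨le_rfl, hT⟩ ⟨hs.1, hs.2.trans hθ2⟩
    simp only
    rw [← h0]; ring_nf
  rw [intervalIntegral.integral_congr hEq]
  have hccont : Continuous (fun s : ℝ => Real.cos (k*s)) :=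
    Real.continuous_cos.comp (continuous_const.mul continuous_id)
  have i1 : IntervalIntegrable (fun s => g 0 * Real.cos (k*s)) volume 0 θ :=
    (continuous_const.mul hccont).intervalIntegrable _ _
  have iP : ContinuousOn (fun s => ∫ t in (0:ℝ)..s, g' t) (Set.uIcc 0 θ) :=
    continuousOn_primitive_interval (by
      rw [Set.uIcc_of_le hθ1]
      exact (intervalIntegrable_iff_integrableOn_Icc_of_le hθ1).mp hg'θ)
  have i2 : IntervalIntegrable (fun s => (∫ t in (0:ℝ)..s, g' t) * Real.cos (k*s))
      volume 0 θ := (iP.mul hccont.continuousOn).intervalIntegrable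
  have hsplit : ∀ s : ℝ, (g 0 + ∫ t in (0:ℝ)..s, g' t) * Real.cos (k*s)
      = g 0 * Real.cos (k*s) + (∫ t in (0:ℝ)..s, g' t) * Real.cos (k*s) := fun s => by ring
  simp only [hsplit]
  rw [intervalIntegral.integral_add i1 i2, intervalIntegral.integral_const_mul,
    integral_cos_k k hk, fubini_triangle hθ1 hg'θ.1 hccont]
  have hEq2 : Set.EqOn (fun t => g' t * ∫ s in t..θ, Real.cos (k*s))
      (fun t => g' t * (Real.sin (k*θ)/k) - g' t * Real.sin (k*t)/k) (Set.uIcc 0 θ) := by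
    intro t _
    simp only
    rw [integral_cos_k k hk]; ring
  rw [intervalIntegral.integral_congr hEq2]
  have j1 : IntervalIntegrable (fun t => g' t * (Real.sin (k*θ)/k)) volume 0 θ :=
    hg'θ.mul_const _
  have j2 : IntervalIntegrable (fun t => g' t * Real.sin (k*t)/k) volume 0 θ := by
    have : Continuous (fun t : ℝ => Real.sin (k*t)/k) :=
      (Real.continuous_sin.comp (continuous_const.mul continuous_id)).div_const k
    simpa [mul_div_assoc] using hg'θ.mul_continuousOn this.continuousOn
  rw [intervalIntegral.integral_sub j1 j2, intervalIntegral.integral_mul_const]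
  have h0θ := hftc 0 θ ⟨le_rfl, hT⟩ ⟨hθ1, hθ2⟩
  rw [← h0θ]
  have : ∫ t in (0:ℝ)..θ, g' t * Real.sin (k*t)/k
      = (∫ t in (0:ℝ)..θ, g' t * Real.sin (k*t))/k := by
    rw [intervalIntegral.integral_div]
  rw [this]
  simp [Real.sin_zero, mul_zero]
  ring

noncomputable section

/-- for `g : [0,2π] → ℝ` absolutely continuous and `2π`-periodic, `n ≥ 1`
and `Ψ(θ) = (√2/n)cos(nθ)`, the primitive `θ ↦ ∫₀^θ g ((Ψ')² − 1)` satisfies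
`‖∫₀^θ g((Ψ')² − 1)‖_{L¹(0,2π)} ≤ (C/n)(‖g‖_{L¹(0,2π)} + ‖g'‖_{L¹(0,2π)})`
for a universal constant `C`. -/
theorem stmt8_primitive_L1_bound :
    ∃ C : ℝ, 0 < C ∧
      ∀ (n : ℕ), 0 < n →
      ∀ (g g' : ℝ → ℝ),
        Function.Periodic g (2 * π) →
        IntervalIntegrable g volume 0 (2 * π) →
        IntervalIntegrable g' volume 0 (2 * π) →
        (∀ a b, a ∈ Set.Icc (0:ℝ) (2 * π) → b ∈ Set.Icc (0:ℝ) (2 * π) →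
          g b - g a = ∫ t in a..b, g' t) →
        (∫ θ in (0:ℝ)..(2 * π),
            |∫ s in (0:ℝ)..θ,
              g s * ((deriv (fun t => (Real.sqrt 2 / n) * Real.cos (n * t)) s) ^ 2 - 1)|) ≤
          (C / n) * ((∫ θ in (0:ℝ)..(2 * π), |g θ|) + ∫ θ in (0:ℝ)..(2 * π), |g' θ|) := by
  refine ⟨π, Real.pi_pos, ?_⟩
  intro n hn g g' hper hg hg' hftc
  clear hper
  have hn0 : (0:ℝ) < n := by exact_mod_cast hn
  have hnne : ((n:ℝ)) ≠ 0 := hn0.ne'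
  have hkpos : (0:ℝ) < 2*(n:ℝ) := by positivity
  have hkne : (2*(n:ℝ)) ≠ 0 := hkpos.ne'
  have h2π : (0:ℝ) ≤ 2*π := by positivity
  -- Step A : rewrite the derivative
  have hd : ∀ s : ℝ, deriv (fun t => (Real.sqrt 2 / n) * Real.cos (n * t)) s
      = -(Real.sqrt 2 * Real.sin ((n:ℝ) * s)) := by
    intro s
    have h2 : HasDerivAt (fun t : ℝ => Real.cos ((n:ℝ)*t))
        (-Real.sin ((n:ℝ)*s) * ((n:ℝ)*1)) s :=
      (Real.hasDerivAt_cos ((n:ℝ)*s)).comp s ((hasDerivAt_id s).const_mul (n:ℝ))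
    have h1 := h2.const_mul (Real.sqrt 2 / (n:ℝ))
    rw [h1.deriv]
    field_simp
  have hintg : ∀ s : ℝ,
      g s * ((deriv (fun t => (Real.sqrt 2 / n) * Real.cos (n * t)) s)^2 - 1)
        = -(g s * Real.cos (2*(n:ℝ)*s)) := by
    intro s
    rw [hd s]
    have hsq : Real.sqrt 2^2 = 2 := Real.sq_sqrt (by norm_num)
    have hcos := Real.cos_two_mul ((n:ℝ)*s)
    have hpy := Real.sin_sq_add_cos_sq ((n:ℝ)*s)
    rw [mul_assoc, hcos]
    linear_combination (g s) * (Real.sin ((n:ℝ)*s))^2 * hsq + 2 * (g s) * hpy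
  have hF : ∀ θ : ℝ,
      (∫ s in (0:ℝ)..θ, g s * ((deriv (fun t => (Real.sqrt 2 / n) * Real.cos (n * t)) s)^2 - 1))
        = -(∫ s in (0:ℝ)..θ, g s * Real.cos (2*(n:ℝ)*s)) := by
    intro θ
    rw [intervalIntegral.integral_congr (g := fun s => -(g s * Real.cos (2*(n:ℝ)*s)))
      (fun s _ => hintg s), intervalIntegral.integral_neg]
  have hout : (∫ θ in (0:ℝ)..(2*π), |∫ s in (0:ℝ)..θ,
        g s * ((deriv (fun t => (Real.sqrt 2 / n) * Real.cos (n * t)) s)^2 - 1)|)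
      = ∫ θ in (0:ℝ)..(2*π), |∫ s in (0:ℝ)..θ, g s * Real.cos (2*(n:ℝ)*s)| :=
    intervalIntegral.integral_congr (fun θ _ => by rw [hF θ, abs_neg])
  rw [hout]
  set A := ∫ θ in (0:ℝ)..(2*π), |g θ| with hA'
  set B := ∫ θ in (0:ℝ)..(2*π), |g' θ| with hB'
  have hccont : Continuous (fun s : ℝ => Real.cos (2*(n:ℝ)*s)) :=
    Real.continuous_cos.comp (continuous_const.mul continuous_id)
  have hscont : Continuous (fun s : ℝ => Real.sin (2*(n:ℝ)*s)) :=
    Real.continuous_sin.comp (continuous_const.mul continuous_id)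
  -- pointwise bound
  have hbd : ∀ θ ∈ Set.Icc (0:ℝ) (2*π),
      |∫ s in (0:ℝ)..θ, g s * Real.cos (2*(n:ℝ)*s)|
        ≤ |g θ|/(2*(n:ℝ)) + B/(2*(n:ℝ)) := by
    intro θ hθ
    rw [rep_lemma hkne hθ hg' hftc]
    have hg'θ : IntervalIntegrable g' volume 0 θ := hg'.mono_set (by
      rw [Set.uIcc_of_le hθ.1, Set.uIcc_of_le h2π]
      exact Set.Icc_subset_Icc le_rfl hθ.2)
    have hmulint : IntervalIntegrable (fun t => g' t * Real.sin (2*(n:ℝ)*t)) volume 0 θ :=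
      hg'θ.mul_continuousOn hscont.continuousOn
    have e1 : |g θ * Real.sin (2*(n:ℝ)*θ)/(2*(n:ℝ))| ≤ |g θ|/(2*(n:ℝ)) := by
      rw [abs_div, abs_mul, abs_of_pos hkpos]
      have h1 : |g θ| * |Real.sin (2*(n:ℝ)*θ)| ≤ |g θ| :=
        mul_le_of_le_one_right (abs_nonneg _) (Real.abs_sin_le_one _)
      exact div_le_div_of_nonneg_right h1 hkpos.le |>.trans_eq rfl
    have e2 : |(∫ t in (0:ℝ)..θ, g' t * Real.sin (2*(n:ℝ)*t))/(2*(n:ℝ))|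
        ≤ B/(2*(n:ℝ)) := by
      rw [abs_div, abs_of_pos hkpos]
      have s1 : |∫ t in (0:ℝ)..θ, g' t * Real.sin (2*(n:ℝ)*t)|
          ≤ ∫ t in (0:ℝ)..θ, |g' t * Real.sin (2*(n:ℝ)*t)| :=
        intervalIntegral.abs_integral_le_integral_abs hθ.1
      have s2 : (∫ t in (0:ℝ)..θ, |g' t * Real.sin (2*(n:ℝ)*t)|)
          ≤ ∫ t in (0:ℝ)..θ, |g' t| :=
        intervalIntegral.integral_mono_on hθ.1 hmulint.abs hg'θ.abs (fun t _ => by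
          rw [abs_mul]
          exact mul_le_of_le_one_right (abs_nonneg _) (Real.abs_sin_le_one _))
      have s3 : (∫ t in (0:ℝ)..θ, |g' t|) ≤ B :=
        intervalIntegral.integral_mono_interval le_rfl hθ.1 hθ.2
          (Filter.Eventually.of_forall fun t => abs_nonneg _) hg'.abs
      have : |∫ t in (0:ℝ)..θ, g' t * Real.sin (2*(n:ℝ)*t)| ≤ B := by linarith
      exact div_le_div_of_nonneg_right this hkpos.le
    calc |g θ * Real.sin (2*(n:ℝ)*θ)/(2*(n:ℝ))
          - (∫ t in (0:ℝ)..θ, g' t * Real.sin (2*(n:ℝ)*t))/(2*(n:ℝ))|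
        ≤ |g θ * Real.sin (2*(n:ℝ)*θ)/(2*(n:ℝ))|
          + |(∫ t in (0:ℝ)..θ, g' t * Real.sin (2*(n:ℝ)*t))/(2*(n:ℝ))| := abs_sub _ _
      _ ≤ |g θ|/(2*(n:ℝ)) + B/(2*(n:ℝ)) := add_le_add e1 e2
  -- integrability of both sides
  have hgc : IntervalIntegrable (fun s => g s * Real.cos (2*(n:ℝ)*s)) volume 0 (2*π) :=
    hg.mul_continuousOn hccont.continuousOn
  have hFcont : ContinuousOn (fun θ => ∫ s in (0:ℝ)..θ, g s * Real.cos (2*(n:ℝ)*s))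
      (Set.Icc 0 (2*π)) := by
    have h := continuousOn_primitive_interval
      (f := fun s => g s * Real.cos (2*(n:ℝ)*s)) (a := 0) (b := 2*π) (μ := volume) (by
        rw [Set.uIcc_of_le h2π]
        exact (intervalIntegrable_iff_integrableOn_Icc_of_le h2π).mp hgc)
    rwa [Set.uIcc_of_le h2π] at h
  have hLHSint : IntervalIntegrable
      (fun θ => |∫ s in (0:ℝ)..θ, g s * Real.cos (2*(n:ℝ)*s)|) volume 0 (2*π) := by
    apply ContinuousOn.intervalIntegrable
    rw [Set.uIcc_of_le h2π]
    exact hFcont.abs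
  have hRHSint : IntervalIntegrable (fun θ => |g θ|/(2*(n:ℝ)) + B/(2*(n:ℝ)))
      volume 0 (2*π) := (hg.abs.div_const _).add intervalIntegrable_const
  have hA0 : 0 ≤ A := intervalIntegral.integral_nonneg h2π (fun u _ => abs_nonneg _)
  have hB0 : 0 ≤ B := intervalIntegral.integral_nonneg h2π (fun u _ => abs_nonneg _)
  calc (∫ θ in (0:ℝ)..(2*π), |∫ s in (0:ℝ)..θ, g s * Real.cos (2*(n:ℝ)*s)|)
      ≤ ∫ θ in (0:ℝ)..(2*π), (|g θ|/(2*(n:ℝ)) + B/(2*(n:ℝ))) :=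
        intervalIntegral.integral_mono_on h2π hLHSint hRHSint hbd
    _ = A/(2*(n:ℝ)) + (2*π - 0)*(B/(2*(n:ℝ))) := by
        rw [intervalIntegral.integral_add (hg.abs.div_const _) intervalIntegrable_const,
          intervalIntegral.integral_div, intervalIntegral.integral_const, smul_eq_mul]
    _ = (A/2 + π*B)/(n:ℝ) := by field_simp; ring
    _ ≤ (π*(A+B))/(n:ℝ) := by
        have h3 : A/2 + π*B ≤ π*(A+B) := by nlinarith [Real.pi_gt_three]
        gcongr
    _ = π/(n:ℝ)*(A+B) := by ring
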